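/- Let Ω be a TC-space equipped with a shift operator θ, and let κ and σ be stopping times. Then the map τ : Ω → [0,∞] defined by τ(ω) = κ(ω) + σ(θ_κ(ω)) is a stopping time. -/

import Mathlib

open MeasureTheory Set NNReal ENNReal

/-- A T-space (truncated space): a filtered measurable space `(Ω, 𝓕, (𝓕ₜ)_{t ∈ [0,∞)})`
with `𝓕 = ⋁ₜ 𝓕ₜ`, equipped with a truncation family `(Tₜ)` such that `(t, ω) ↦ Tₜ ω` is
jointly measurable, `Tₜ ∘ Tₛ = T_{s ∧ t}` and `𝓕ₜ = σ(Tₜ)`. -/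
structure TSpace (Ω : Type*) [mΩ : MeasurableSpace Ω] where
  filt : ℝ≥0 → MeasurableSpace Ω
  T : ℝ≥0 → Ω → Ω
  iSup_filt : (⨆ t : ℝ≥0, filt t) = mΩ
  meas_T : Measurable fun p : ℝ≥0 × Ω => T p.1 p.2
  T_comp : ∀ (s t : ℝ≥0) (ω : Ω), T t (T s ω) = T (min s t) ω
  filt_eq : ∀ t : ℝ≥0, filt t = MeasurableSpace.comap (T t) mΩ

namespace TSpace

variable {Ω : Type*} [mΩ : MeasurableSpace Ω]

/-- Truncation indexed by extended times, with the convention `T_∞ = id`. -/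
noncomputable def Te (X : TSpace Ω) (t : ℝ≥0∞) (ω : Ω) : Ω :=
  if t = ∞ then ω else X.T t.toNNReal ω

/-- A (raw) stopping time on a T-space: `{τ ≤ t} ∈ 𝓕ₜ` for all `t ∈ [0,∞)`. -/
def IsStoppingTime (X : TSpace Ω) (τ : Ω → ℝ≥0∞) : Prop :=
  ∀ t : ℝ≥0, MeasurableSet[X.filt t] {ω | τ ω ≤ t}

/-- Truncation at a stopping time: `T_τ(ω) = T_{τ(ω)}(ω)`. -/
noncomputable def Tstop (X : TSpace Ω) (τ : Ω → ℝ≥0∞) (ω : Ω) : Ω :=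
  X.Te (τ ω) ω

end TSpace

open MeasureTheory Set NNReal ENNReal

/-- The positive part of an extended-real number, as an element of `ℝ≥0∞`. -/
noncomputable def EReal.posPart (x : EReal) : ℝ≥0∞ :=
  if x = ⊤ then ⊤ else ENNReal.ofReal x.toReal

/-- The (possibly `-∞`-valued) integral `∫ G dμ = ∫ G⁺ dμ − ∫ G⁻ dμ` of an extended-real
function, meaningful whenever `∫ G⁺ dμ < ∞`. -/
noncomputable def eIntegral {Ω : Type*} [MeasurableSpace Ω] (μ : Measure Ω)
    (G : Ω → EReal) : EReal :=
  ((∫⁻ ω, (G ω).posPart ∂μ : ℝ≥0∞) : EReal) - ((∫⁻ ω, (-(G ω)).posPart ∂μ : ℝ≥0∞) : EReal)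

/-- A map is universally measurable if it is `μ`-null measurable (i.e. measurable for the
`μ`-completed σ-algebra) for every Borel probability measure `μ`. -/
def UnivMeasurable {α β : Type*} [MeasurableSpace α] [MeasurableSpace β] (f : α → β) : Prop :=
  ∀ μ : Measure α, IsProbabilityMeasure μ → NullMeasurable f μ

/-- A (universally measurable) kernel from `α` to `Ω`: a family of Borel probability measures
`ν x` such that `x ↦ ν x B` is universally measurable for every Borel set `B`. -/
def IsUKernel {α Ω : Type*} [MeasurableSpace α] [MeasurableSpace Ω]
    (ν : α → ProbabilityMeasure Ω) : Prop :=
  ∀ B : Set Ω, MeasurableSet B → UnivMeasurable fun x => (ν x : Measure Ω) B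

/-- A TC-space (truncation–concatenation space): a T-space together with a measurable
compatibility set `𝒞 ⊆ Ω × [0,∞) × Ω` and a concatenation operator `∗ : 𝒞 → Ω`
(extended arbitrarily off `𝒞`, measurable on `𝒞`) satisfying the compatibility and
truncation axioms of Definition of TC-spaces. -/
structure TCSpace (Ω : Type*) [mΩ : MeasurableSpace Ω] extends TSpace Ω where
  Comp : Set (Ω × ℝ≥0 × Ω)
  meas_Comp : MeasurableSet Comp
  conc : Ω → ℝ≥0 → Ω → Ω
  meas_conc : Measurable fun p : Comp => conc (p : Ω × ℝ≥0 × Ω).1 (p : Ω × ℝ≥0 × Ω).2.1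
      (p : Ω × ℝ≥0 × Ω).2.2
  comp_left : ∀ (ω : Ω) (t : ℝ≥0) (ω' : Ω), ((ω, t, ω') ∈ Comp ↔ (T t ω, t, ω') ∈ Comp)
  comp_right : ∀ (ω : Ω) (t : ℝ≥0) (ω' : Ω) (s : ℝ≥0),
      ((ω, t, ω') ∈ Comp ↔ (ω, t, T s ω') ∈ Comp)
  conc_left : ∀ (ω : Ω) (t : ℝ≥0) (ω' : Ω), (ω, t, ω') ∈ Comp →
      conc ω t ω' = conc (T t ω) t ω'
  trunc_conc_le : ∀ (ω : Ω) (t : ℝ≥0) (ω' : Ω) (s : ℝ≥0), (ω, t, ω') ∈ Comp → s ≤ t →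
      T s (conc ω t ω') = T s ω
  trunc_conc_gt : ∀ (ω : Ω) (t : ℝ≥0) (ω' : Ω) (s : ℝ≥0), (ω, t, ω') ∈ Comp → t < s →
      T s (conc ω t ω') = conc ω t (T (s - t) ω')

namespace TCSpace

variable {Ω : Type*} [mΩ : MeasurableSpace Ω]

/-- Concatenation at an extended time, with the convention `ω ∗_∞ ω' = ω`. -/
noncomputable def concE (X : TCSpace Ω) (ω : Ω) (t : ℝ≥0∞) (ω' : Ω) : Ω :=
  if t = ∞ then ω else X.conc ω t.toNNReal ω'

/-- Extended compatibility: any two elements are compatible at `t = ∞`. -/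
def CompE (X : TCSpace Ω) (ω : Ω) (t : ℝ≥0∞) (ω' : Ω) : Prop :=
  t = ∞ ∨ (ω, t.toNNReal, ω') ∈ X.Comp

/-- A probability measure `μ` and a kernel `ν` are compatible at a stopping time `τ`:
`ν^{≤τ}_ω(𝒞_{ω,τ(ω)}) = 1` for `μ`-almost every `ω`. -/
def MeasCompatible (X : TCSpace Ω) (μ : Measure Ω) (ν : Ω → ProbabilityMeasure Ω)
    (τ : Ω → ℝ≥0∞) : Prop :=
  ∀ᵐ ω ∂μ, (ν (X.toTSpace.Tstop τ ω) : Measure Ω) {ω' | X.CompE ω (τ ω) ω'} = 1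

/-- The concatenation `μ ∗_τ ν` of a measure and a kernel at a stopping time `τ`: the
pushforward of `μ(dω) ν^{≤τ}_ω(dω')` under `(ω, ω') ↦ ω ∗_{τ(ω)} ω'`. -/
noncomputable def concMeasure (X : TCSpace Ω) (μ : Measure Ω)
    (ν : Ω → ProbabilityMeasure Ω) (τ : Ω → ℝ≥0∞) : Measure Ω :=
  μ.bind fun ω => Measure.map (fun ω' => X.concE ω (τ ω) ω') (ν (X.toTSpace.Tstop τ ω))

/-- A tail map: `G(ω ∗_t ω') = G(ω')` for all finite `t` and compatible pairs. -/
def IsTail (X : TCSpace Ω) (G : Ω → EReal) : Prop :=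
  ∀ (t : ℝ≥0) (ω ω' : Ω), (ω, t, ω') ∈ X.Comp → G (X.conc ω t ω') = G ω'

end TCSpace

/-- A universally measurable selector of a control correspondence `P`. -/
def IsSelector {Ω : Type*} [MeasurableSpace Ω] (P : Ω → Set (ProbabilityMeasure Ω))
    (ν : Ω → ProbabilityMeasure Ω) : Prop :=
  IsUKernel ν ∧ ∀ ω, ν ω ∈ P ω

/-- A control correspondence on a TC-space is concatenable if for every `ω`, `μ ∈ P ω`,
`P`-selector `ν` and stopping time `τ`, `ν` is compatible with `μ` at `τ` and
`μ ∗_τ ν ∈ P ω`. -/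
def TCSpace.Concatenable {Ω : Type*} [MeasurableSpace Ω] (X : TCSpace Ω)
    (P : Ω → Set (ProbabilityMeasure Ω)) : Prop :=
  ∀ (ω : Ω) (μ : ProbabilityMeasure Ω), μ ∈ P ω →
    ∀ ν : Ω → ProbabilityMeasure Ω, IsSelector P ν →
      ∀ τ : Ω → ℝ≥0∞, X.toTSpace.IsStoppingTime τ →
        X.MeasCompatible (μ : Measure Ω) ν τ ∧
          ∃ μ' ∈ P ω, (μ' : Measure Ω) = X.concMeasure (μ : Measure Ω) ν τ

/-- A control correspondence on a TC-space is disintegrable if for every `ω`, `μ ∈ P ω` and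
stopping time `τ` there is a `P`-selector `ν`, compatible with `μ` at `τ`, with
`μ = μ ∗_τ ν`. -/
def TCSpace.Disintegrable {Ω : Type*} [MeasurableSpace Ω] (X : TCSpace Ω)
    (P : Ω → Set (ProbabilityMeasure Ω)) : Prop :=
  ∀ (ω : Ω) (μ : ProbabilityMeasure Ω), μ ∈ P ω →
    ∀ τ : Ω → ℝ≥0∞, X.toTSpace.IsStoppingTime τ →
      ∃ ν : Ω → ProbabilityMeasure Ω, IsSelector P ν ∧
        X.MeasCompatible (μ : Measure Ω) ν τ ∧
          (μ : Measure Ω) = X.concMeasure (μ : Measure Ω) ν τ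

/-- A real path indexed by `[0,∞)` is càdlàg: right-continuous with left limits. -/
def IsCadlag (f : ℝ≥0 → ℝ) : Prop :=
  (∀ t : ℝ≥0, ContinuousWithinAt f (Set.Ici t) t) ∧
  (∀ t : ℝ≥0, 0 < t → ∃ L : ℝ, Filter.Tendsto f (nhdsWithin t (Set.Iio t)) (nhds L))

/-- A càdlàg adapted real process for a filtration `F`. -/
def CadlagAdapted {Ω : Type*} [MeasurableSpace Ω] (F : ℝ≥0 → MeasurableSpace Ω)
    (Y : ℝ≥0 → Ω → ℝ) : Prop :=
  (∀ ω, IsCadlag fun t => Y t ω) ∧ (∀ t : ℝ≥0, Measurable[F t] (Y t))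

/-- The space–time exit time `τₙ(ω) = inf{t ≥ 0 : |Yₜ(ω)| ≥ n} ∧ n`. -/
noncomputable def stopTau {Ω : Type*} (Y : ℝ≥0 → Ω → ℝ) (n : ℕ) (ω : Ω) : ℝ≥0 :=
  sInf ({t : ℝ≥0 | (n : ℝ) ≤ |Y t ω|} ∪ {(n : ℝ≥0)})

/-- The stopped process `Yⁿ = Y^{τₙ}`. -/
noncomputable def stopped {Ω : Type*} (Y : ℝ≥0 → Ω → ℝ) (n : ℕ) : ℝ≥0 → Ω → ℝ :=
  fun t ω => Y (min (stopTau Y n ω) t) ω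

/-- The martingale property (via set integrals) of a process for a filtration `F` and a
measure `μ`: integrability, together with `∫_A Y_t dμ = ∫_A Y_s dμ` for `s ≤ t` and
`A ∈ F s`. -/
def IsMartingaleOn {Ω : Type*} [MeasurableSpace Ω] (F : ℝ≥0 → MeasurableSpace Ω)
    (μ : MeasureTheory.Measure Ω) (Y : ℝ≥0 → Ω → ℝ) : Prop :=
  (∀ t : ℝ≥0, MeasureTheory.Integrable (Y t) μ) ∧
  ∀ s t : ℝ≥0, s ≤ t → ∀ A : Set Ω, MeasurableSet[F s] A →
    ∫ ω in A, Y t ω ∂μ = ∫ ω in A, Y s ω ∂μ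

/-- The adjusted concatenation on real paths:
`(x ⋆_t x')(s) = x(s)` for `s ≤ t` and `x(t) + x'(s−t) − x'(0)` for `s > t`. -/
noncomputable def adjConc (x : ℝ≥0 → ℝ) (t : ℝ≥0) (x' : ℝ≥0 → ℝ) : ℝ≥0 → ℝ :=
  fun s => if s ≤ t then x s else x t + x' (s - t) - x' 0

/-- A TC-morphism from a TC-space into `(D_ℝ, ⋆)`: a map `Φ` into càdlàg real paths,
non-anticipating (each `Φ_t` is `𝓕ₜ`-measurable) and respecting concatenation:
`Φ(ω ∗_t ω') = Φ(ω) ⋆_t Φ(ω')` on the compatibility set. -/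
def IsTCMorphismD {Ω : Type*} [mΩ : MeasurableSpace Ω] (X : TCSpace Ω)
    (Φ : Ω → ℝ≥0 → ℝ) : Prop :=
  (∀ ω, IsCadlag (Φ ω)) ∧
  (∀ t : ℝ≥0, Measurable[X.filt t] fun ω => Φ ω t) ∧
  (∀ (t : ℝ≥0) (ω ω' : Ω), (ω, t, ω') ∈ X.Comp →
    Φ (X.conc ω t ω') = adjConc (Φ ω) t (Φ ω'))

/-- A TC-morphism into `(D_ℝ⁰, ⋆)`: a TC-morphism into `(D_ℝ, ⋆)` whose paths start at `0`. -/
def IsTCMorphismD0 {Ω : Type*} [mΩ : MeasurableSpace Ω] (X : TCSpace Ω)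
    (Φ : Ω → ℝ≥0 → ℝ) : Prop :=
  IsTCMorphismD X Φ ∧ ∀ ω, Φ ω 0 = 0

/-- `Φ` is canonically locally bounded: there are constants `Mₙ` with `|Φⁿ_t(ω)| ≤ Mₙ`
for all `ω`, `t`, where `Φⁿ` is `Φ` stopped at the space–time exit time `τₙ`. -/
def CanLocBounded {Ω : Type*} (Φ : Ω → ℝ≥0 → ℝ) : Prop :=
  ∃ M : ℕ → ℝ, ∀ (n : ℕ) (ω : Ω) (t : ℝ≥0),
    |stopped (fun t ω => Φ ω t) n t ω| ≤ M n

/-- A shift operator on a TC-space: a measurable partial inverse of concatenation with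
`ω ∗_t θ_t(ω) = ω` and `(θ_t(ω))_{≤t+s} = (θ_t(ω_{≤s}))_{≤t+s}`. -/
def IsShift {Ω : Type*} [mΩ : MeasurableSpace Ω] (X : TCSpace Ω)
    (θ : ℝ≥0 → Ω → Ω) : Prop :=
  Measurable (fun p : ℝ≥0 × Ω => θ p.1 p.2) ∧
  (∀ (t : ℝ≥0) (ω : Ω), (ω, t, θ t ω) ∈ X.Comp ∧ X.conc ω t (θ t ω) = ω) ∧
  (∀ (t s : ℝ≥0) (ω : Ω), X.T (t + s) (θ t ω) = X.T (t + s) (θ t (X.T s ω)))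

/-- The shift at a stopping time, `θ_κ(ω) = θ_{κ(ω)}(ω)` with `θ_∞ = id`. -/
noncomputable def shiftStop {Ω : Type*}
    (θ : ℝ≥0 → Ω → Ω) (κ : Ω → ℝ≥0∞) (ω : Ω) : Ω :=
  if κ ω = ∞ then ω else θ (κ ω).toNNReal ω

/-- The `(𝒟, X)`-generated control correspondence `𝒫̄(x)`: all Borel probability measures
under which every `Φⁿ`, `Φ ∈ 𝒟`, is a martingale and `X₀ = x` a.s. -/
def genCorr {Ω E : Type*} [mΩ : MeasurableSpace Ω] [MeasurableSpace E] (X : TCSpace Ω)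
    {ι : Type*} (D : ι → Ω → ℝ≥0 → ℝ) (Xm : Ω → E) (x : E) :
    Set (MeasureTheory.ProbabilityMeasure Ω) :=
  {μ | (∀ i, ∀ n : ℕ, IsMartingaleOn X.filt (μ : MeasureTheory.Measure Ω)
          (stopped (fun t ω => D i ω t) n)) ∧
       (μ : MeasureTheory.Measure Ω) {ω | Xm (X.T 0 ω) = x} = 1}

/-- On a TC-space equipped with a shift operator `θ`, for stopping times
`κ` and `σ`, the map `τ(ω) = κ(ω) + σ(θ_κ(ω))` is again a stopping time. -/
theorem stmt15 {Ω : Type*} [mΩ : MeasurableSpace Ω] [StandardBorelSpace Ω]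
    (X : TCSpace Ω) (θ : ℝ≥0 → Ω → Ω) (hθ : IsShift X θ)
    (κ σ : Ω → ℝ≥0∞)
    (hκ : X.toTSpace.IsStoppingTime κ) (hσ : X.toTSpace.IsStoppingTime σ) :
    X.toTSpace.IsStoppingTime (fun ω => κ ω + σ (shiftStop θ κ ω)) := by
  classical
  have hT : ∀ u : ℝ≥0, Measurable (X.T u) := fun u =>
    X.meas_T.comp (measurable_const.prodMk measurable_id)
  have hfilt_le : ∀ u : ℝ≥0, X.filt u ≤ mΩ := fun u => by
    rw [X.filt_eq]; exact (hT u).comap_le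
  -- key invariance: a stopping time evaluated before `s` only depends on `T s`.
  have key : ∀ (ρ : Ω → ℝ≥0∞), X.toTSpace.IsStoppingTime ρ →
      ∀ (s : ℝ≥0) (ω₁ ω₂ : Ω), X.T s ω₁ = X.T s ω₂ →
        (ρ ω₁ ≤ (s : ℝ≥0∞) ↔ ρ ω₂ ≤ (s : ℝ≥0∞)) := by
    intro ρ hρ s ω₁ ω₂ h
    have hs := hρ s
    rw [X.filt_eq, MeasurableSpace.measurableSet_comap] at hs
    obtain ⟨B, -, hB⟩ := hs
    have hiff : ∀ x, ρ x ≤ (s : ℝ≥0∞) ↔ X.T s x ∈ B := fun x =>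
      (Set.ext_iff.mp hB x).symm
    rw [hiff, hiff, h]
  -- measurability of stopping times
  have hmeas : ∀ (ρ : Ω → ℝ≥0∞), X.toTSpace.IsStoppingTime ρ → Measurable ρ := by
    intro ρ hρ
    apply measurable_of_Iic
    intro x
    rcases eq_or_ne x ∞ with rfl | hx
    · simp
    · have h1 : MeasurableSet {ω | ρ ω ≤ ((x.toNNReal : ℝ≥0) : ℝ≥0∞)} :=
        hfilt_le _ _ (hρ x.toNNReal)
      rw [ENNReal.coe_toNNReal hx] at h1
      exact h1
  have hκm : Measurable κ := hmeas κ hκ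
  have hσm : Measurable σ := hmeas σ hσ
  have hshift : Measurable (shiftStop θ κ) := by
    have hset : MeasurableSet {ω | κ ω = ∞} := hκm (measurableSet_singleton ∞)
    exact Measurable.ite hset measurable_id
      (hθ.1.comp ((ENNReal.measurable_toNNReal.comp hκm).prodMk measurable_id))
  have hτm : Measurable (fun ω => κ ω + σ (shiftStop θ κ ω)) :=
    hκm.add (hσm.comp hshift)
  intro t
  rw [X.filt_eq, MeasurableSpace.measurableSet_comap]
  refine ⟨{ω | κ ω + σ (shiftStop θ κ ω) ≤ (t : ℝ≥0∞)}, hτm measurableSet_Iic, ?_⟩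
  ext ω
  simp only [Set.mem_preimage, Set.mem_setOf_eq]
  have hTTeq : ∀ s : ℝ≥0, s ≤ t → X.T s (X.T t ω) = X.T s ω := fun s hs => by
    rw [X.T_comp t s ω, min_eq_right hs]
  by_cases hκt : κ ω ≤ (t : ℝ≥0∞)
  · -- main case
    set r : ℝ≥0 := (κ ω).toNNReal with hrdef
    have hκne : κ ω ≠ ∞ := ne_top_of_le_ne_top ENNReal.coe_ne_top hκt
    have hκr : κ ω = (r : ℝ≥0∞) := (ENNReal.coe_toNNReal hκne).symm
    have hrt' : (r : ℝ≥0∞) ≤ (t : ℝ≥0∞) := hκr ▸ hκt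
    have hrt : r ≤ t := ENNReal.coe_le_coe.mp hrt'
    -- κ (T t ω) = κ ω
    have hκT : κ (X.T t ω) = κ ω := by
      have h1 : κ (X.T t ω) ≤ (t : ℝ≥0∞) :=
        (key κ hκ t (X.T t ω) ω (hTTeq t le_rfl)).mpr hκt
      have h2 : κ (X.T t ω) ≤ (r : ℝ≥0∞) :=
        (key κ hκ r (X.T t ω) ω (hTTeq r hrt)).mpr (le_of_eq hκr)
      have hκTne : κ (X.T t ω) ≠ ∞ := ne_top_of_le_ne_top ENNReal.coe_ne_top h1
      set r' : ℝ≥0 := (κ (X.T t ω)).toNNReal with hr'def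
      have hκr' : κ (X.T t ω) = (r' : ℝ≥0∞) := (ENNReal.coe_toNNReal hκTne).symm
      have hr't : r' ≤ t := ENNReal.coe_le_coe.mp (hκr' ▸ h1)
      have h3 : κ ω ≤ (r' : ℝ≥0∞) :=
        (key κ hκ r' (X.T t ω) ω (hTTeq r' hr't)).mp (le_of_eq hκr')
      exact le_antisymm (hκr ▸ h2) (hκr' ▸ h3)
    have hss1 : shiftStop θ κ (X.T t ω) = θ r (X.T t ω) := by
      simp only [shiftStop, hκT, if_neg hκne]
      rfl
    have hss2 : shiftStop θ κ ω = θ r ω := by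
      simp only [shiftStop, if_neg hκne]
      rfl
    set u : ℝ≥0 := t - r with hudef
    have hu : u ≤ r + t := le_trans tsub_le_self (le_add_left le_rfl)
    have hθeq : X.T u (θ r (X.T t ω)) = X.T u (θ r ω) := by
      have h3 := hθ.2.2 r t ω
      have e1 : X.T u (θ r (X.T t ω)) = X.T u (X.T (r + t) (θ r (X.T t ω))) := by
        rw [X.T_comp, min_eq_right hu]
      have e2 : X.T u (θ r ω) = X.T u (X.T (r + t) (θ r ω)) := by
        rw [X.T_comp, min_eq_right hu]
      rw [e1, e2, h3]
    have hσiff : σ (θ r (X.T t ω)) ≤ (u : ℝ≥0∞) ↔ σ (θ r ω) ≤ (u : ℝ≥0∞) :=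
      key σ hσ u _ _ hθeq
    have harr : ∀ b : ℝ≥0∞, ((r : ℝ≥0∞) + b ≤ (t : ℝ≥0∞) ↔ b ≤ (u : ℝ≥0∞)) := by
      intro b
      rw [hudef, ENNReal.coe_sub]
      exact ((ENNReal.cancel_of_ne ENNReal.coe_ne_top).le_tsub_iff_left hrt').symm
    rw [hκT, hss1, hss2, hκr, harr, harr, hσiff]
  · -- κ ω > t : both sides fail
    have h1 : ¬ κ (X.T t ω) ≤ (t : ℝ≥0∞) := fun h =>
      hκt ((key κ hκ t (X.T t ω) ω (hTTeq t le_rfl)).mp h)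
    constructor <;> intro h
    · exact absurd (le_trans le_self_add h) h1
    · exact absurd (le_trans le_self_add h) hκt
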